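/- Fix positive integers n, d, L and reals ρ ≥ 0, β ≥ 0. There exists a constant C ≥ 0, depending only on ρ, β, n, d, L, such that the following holds: for every σ : ℝ → ℝ that is ρ-Lipschitz with σ(0) = 0, all n×n matrices A and A_SG with ‖A‖ ≤ β and ‖A_SG‖ ≤ β, every n×d matrix X with ‖X‖ ≤ β, and every family of d×d weight matrices W^(0), …, W^(L−1) with ‖W^(l)‖ ≤ β for all l, the exact GCN forward recursion (Z^(l), H^(l)) and the SG forward recursion (Z_SG^(l), H_SG^(l)) (same X, same weights, A replaced by A_SG) satisfy ‖Z_SG^(l) − Z^(l)‖ ≤ C·‖A_SG − A‖ and ‖H_SG^(l) − H^(l)‖ ≤ C·‖A_SG − A‖ for all 1 ≤ l ≤ L. -/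
import Mathlib


attribute [local instance] Matrix.normedAddCommGroup

/-- The activations of the GCN forward recursion: `gcnH A X W σ 0 = X` and
`gcnH A X W σ (l+1) = σ(A * gcnH A X W σ l * W l)` entrywise. -/
noncomputable def gcnH {n d : ℕ} (A : Matrix (Fin n) (Fin n) ℝ)
    (X : Matrix (Fin n) (Fin d) ℝ) (W : ℕ → Matrix (Fin d) (Fin d) ℝ)
    (σ : ℝ → ℝ) : ℕ → Matrix (Fin n) (Fin d) ℝ
  | 0 => X
  | l + 1 => (A * gcnH A X W σ l * W l).map σ

/-- The pre-activations of the GCN forward recursion: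
`gcnZ A X W σ (l+1) = A * gcnH A X W σ l * W l` (the value at index 0 is junk). -/
noncomputable def gcnZ {n d : ℕ} (A : Matrix (Fin n) (Fin n) ℝ)
    (X : Matrix (Fin n) (Fin d) ℝ) (W : ℕ → Matrix (Fin d) (Fin d) ℝ)
    (σ : ℝ → ℝ) : ℕ → Matrix (Fin n) (Fin d) ℝ
  | 0 => 0
  | l + 1 => A * gcnH A X W σ l * W l

private lemma matNormMul {n m p : ℕ} (A : Matrix (Fin n) (Fin m) ℝ)
    (B : Matrix (Fin m) (Fin p) ℝ) : ‖A * B‖ ≤ m * ‖A‖ * ‖B‖ := by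
  rw [Matrix.norm_le_iff (by positivity)]
  intro i j
  have h : (A * B) i j = ∑ k, A i k * B k j := Matrix.mul_apply
  rw [h]
  calc ‖∑ k, A i k * B k j‖ ≤ ∑ k : Fin m, ‖A i k * B k j‖ := norm_sum_le _ _
    _ ≤ ∑ _k : Fin m, ‖A‖ * ‖B‖ := Finset.sum_le_sum (fun k _ => by
        rw [norm_mul]
        exact mul_le_mul (Matrix.norm_entry_le_entrywise_sup_norm A)
          (Matrix.norm_entry_le_entrywise_sup_norm B) (norm_nonneg _) (norm_nonneg _))
    _ = m * ‖A‖ * ‖B‖ := by simp [mul_assoc]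

private lemma matNormMapSub {n d : ℕ} (σ : ℝ → ℝ) {ρ : ℝ} (hρ : 0 ≤ ρ)
    (hσ : ∀ x y, |σ x - σ y| ≤ ρ * |x - y|) (M N : Matrix (Fin n) (Fin d) ℝ) :
    ‖M.map σ - N.map σ‖ ≤ ρ * ‖M - N‖ := by
  rw [Matrix.norm_le_iff (mul_nonneg hρ (norm_nonneg _))]
  intro i j
  have h : (M.map σ - N.map σ) i j = σ (M i j) - σ (N i j) := rfl
  rw [h, Real.norm_eq_abs]
  calc |σ (M i j) - σ (N i j)| ≤ ρ * |M i j - N i j| := hσ _ _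
    _ ≤ ρ * ‖M - N‖ := by
        have := Matrix.norm_entry_le_entrywise_sup_norm (M - N) (i := i) (j := j)
        rw [Matrix.sub_apply, Real.norm_eq_abs] at this
        exact mul_le_mul_of_nonneg_left this hρ

/-- Lemma 1: for a multi-layer GCN with fixed weights, there is a constant `C`
(depending only on ρ, β, n, d, L) such that the activations and pre-activations
of the SG estimator (using `A_SG` in place of `A`) differ from the exact ones by
at most `C * ‖A_SG - A‖` in each layer `1 ≤ l ≤ L`. -/
theorem gcn_activation_error_bounded {n d L : ℕ} (hn : 0 < n) (hd : 0 < d) (hL : 0 < L)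
    {ρ β : ℝ} (hρ : 0 ≤ ρ) (hβ : 0 ≤ β) :
    ∃ C : ℝ, 0 ≤ C ∧
      ∀ (σ : ℝ → ℝ), (∀ x y : ℝ, |σ x - σ y| ≤ ρ * |x - y|) → σ 0 = 0 →
      ∀ (A ASG : Matrix (Fin n) (Fin n) ℝ), ‖A‖ ≤ β → ‖ASG‖ ≤ β →
      ∀ (X : Matrix (Fin n) (Fin d) ℝ), ‖X‖ ≤ β →
      ∀ (W : ℕ → Matrix (Fin d) (Fin d) ℝ), (∀ l, l < L → ‖W l‖ ≤ β) →
      ∀ l, 1 ≤ l → l ≤ L →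
        ‖gcnZ ASG X W σ l - gcnZ A X W σ l‖ ≤ C * ‖ASG - A‖ ∧
        ‖gcnH ASG X W σ l - gcnH A X W σ l‖ ≤ C * ‖ASG - A‖ := by
  obtain ⟨M, hM⟩ : ∃ M : ℝ, M = n * d * β ^ 2 := ⟨_, rfl⟩
  have hM0 : 0 ≤ M := by rw [hM]; positivity
  obtain ⟨B, hB⟩ : ∃ B : ℝ, B = β * (ρ * M + 1) ^ L := ⟨_, rfl⟩
  have hB0 : 0 ≤ B := by rw [hB]; positivity
  obtain ⟨K, hK⟩ : ∃ K : ℝ, K = n * d * β * B + ρ * M + 1 := ⟨_, rfl⟩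
  have hK1 : 1 ≤ K := by
    rw [hK]
    have h1 : (0:ℝ) ≤ n * d * β * B := by positivity
    have h2 : (0:ℝ) ≤ ρ * M := mul_nonneg hρ hM0
    linarith
  have hK0 : 0 ≤ K := le_trans zero_le_one hK1
  refine ⟨(1 + ρ) * K ^ L, by positivity, ?_⟩
  intro σ hσ hσ0 A ASG hA hASG X hX W hW
  have hρM1 : (1:ℝ) ≤ ρ * M + 1 := by nlinarith [mul_nonneg hρ hM0]
  -- bound on activations for any admissible adjacency
  have hHbound : ∀ (A' : Matrix (Fin n) (Fin n) ℝ), ‖A'‖ ≤ β →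
      ∀ l, l ≤ L → ‖gcnH A' X W σ l‖ ≤ β * (ρ * M + 1) ^ l := by
    intro A' hA' l
    induction l with
    | zero => intro _; simpa [gcnH] using hX
    | succ l ih =>
      intro hlL
      have hl : l ≤ L := Nat.le_of_succ_le hlL
      have ihl := ih hl
      have hnormmap : ∀ (Y : Matrix (Fin n) (Fin d) ℝ), ‖Y.map σ‖ ≤ ρ * ‖Y‖ := by
        intro Y
        have := matNormMapSub σ hρ hσ Y 0
        simpa [Matrix.map_zero, hσ0] using this
      have h1 : ‖gcnH A' X W σ (l+1)‖ ≤ ρ * ‖A' * gcnH A' X W σ l * W l‖ := hnormmap _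
      have h2 : ‖A' * gcnH A' X W σ l * W l‖ ≤
          d * ‖A' * gcnH A' X W σ l‖ * ‖W l‖ := matNormMul _ _
      have h3 : ‖A' * gcnH A' X W σ l‖ ≤ n * ‖A'‖ * ‖gcnH A' X W σ l‖ := matNormMul _ _
      have hWl : ‖W l‖ ≤ β := hW l (lt_of_lt_of_le (Nat.lt_succ_self l) hlL)
      have hpow : (0:ℝ) ≤ (ρ * M + 1) ^ l := by positivity
      calc ‖gcnH A' X W σ (l+1)‖ ≤ ρ * ‖A' * gcnH A' X W σ l * W l‖ := h1
        _ ≤ ρ * (d * ‖A' * gcnH A' X W σ l‖ * ‖W l‖) := mul_le_mul_of_nonneg_left h2 hρ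
        _ ≤ ρ * (d * (n * β * (β * (ρ * M + 1) ^ l)) * β) := by
            gcongr
            calc ‖A' * gcnH A' X W σ l‖ ≤ n * ‖A'‖ * ‖gcnH A' X W σ l‖ := h3
              _ ≤ n * β * (β * (ρ * M + 1) ^ l) := by gcongr
        _ ≤ β * (ρ * M + 1) ^ (l + 1) := by
            have he : ρ * (d * (n * β * (β * (ρ * M + 1) ^ l)) * β)
                = (ρ * M) * (β * (ρ * M + 1) ^ l) := by rw [hM]; ring
            have he2 : β * (ρ * M + 1) ^ (l + 1)
                = (ρ * M) * (β * (ρ * M + 1) ^ l) + β * (ρ * M + 1) ^ l := by ring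
            have hnn : (0:ℝ) ≤ β * (ρ * M + 1) ^ l := by positivity
            linarith
  -- error recursion
  have hErr : ∀ l, l ≤ L →
      ‖gcnH ASG X W σ l - gcnH A X W σ l‖ ≤ ρ * K ^ l * ‖ASG - A‖ ∧
      (1 ≤ l → ‖gcnZ ASG X W σ l - gcnZ A X W σ l‖ ≤ K ^ l * ‖ASG - A‖) := by
    intro l
    induction l with
    | zero =>
      intro _
      refine ⟨?_, fun h => absurd h (by omega)⟩
      have : gcnH ASG X W σ 0 - gcnH A X W σ 0 = 0 := sub_self X
      rw [this, norm_zero]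
      positivity
    | succ l ih =>
      intro hlL
      have hl : l ≤ L := Nat.le_of_succ_le hlL
      obtain ⟨ihH, _⟩ := ih hl
      have hWl : ‖W l‖ ≤ β := hW l (lt_of_lt_of_le (Nat.lt_succ_self l) hlL)
      have hpowK : (1:ℝ) ≤ K ^ l := one_le_pow₀ hK1
      have hpowK0 : (0:ℝ) ≤ K ^ l := by positivity
      have hΔ0 : (0:ℝ) ≤ ‖ASG - A‖ := norm_nonneg _
      have hHSG : ‖gcnH ASG X W σ l‖ ≤ B := by
        refine le_trans (hHbound ASG hASG l hl) ?_
        rw [hB]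
        exact mul_le_mul_of_nonneg_left (pow_le_pow_right₀ hρM1 hl) hβ
      have hdec : gcnZ ASG X W σ (l+1) - gcnZ A X W σ (l+1) =
          (ASG - A) * gcnH ASG X W σ l * W l
          + A * (gcnH ASG X W σ l - gcnH A X W σ l) * W l := by
        show ASG * gcnH ASG X W σ l * W l - A * gcnH A X W σ l * W l = _
        rw [Matrix.sub_mul, Matrix.sub_mul, Matrix.mul_sub, Matrix.sub_mul]
        abel
      have hterm1 : ‖(ASG - A) * gcnH ASG X W σ l * W l‖ ≤
          (n * d * β * B) * ‖ASG - A‖ := by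
        calc ‖(ASG - A) * gcnH ASG X W σ l * W l‖
            ≤ d * ‖(ASG - A) * gcnH ASG X W σ l‖ * ‖W l‖ := matNormMul _ _
          _ ≤ d * (n * ‖ASG - A‖ * ‖gcnH ASG X W σ l‖) * ‖W l‖ := by
              gcongr
              exact matNormMul _ _
          _ ≤ d * (n * ‖ASG - A‖ * B) * β := by gcongr
          _ = (n * d * β * B) * ‖ASG - A‖ := by ring
      have hterm2 : ‖A * (gcnH ASG X W σ l - gcnH A X W σ l) * W l‖ ≤
          (ρ * M) * (K ^ l * ‖ASG - A‖) := by
        have hd0 : (0:ℝ) ≤ ‖gcnH ASG X W σ l - gcnH A X W σ l‖ := norm_nonneg _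
        calc ‖A * (gcnH ASG X W σ l - gcnH A X W σ l) * W l‖
            ≤ d * ‖A * (gcnH ASG X W σ l - gcnH A X W σ l)‖ * ‖W l‖ := matNormMul _ _
          _ ≤ d * (n * ‖A‖ * ‖gcnH ASG X W σ l - gcnH A X W σ l‖) * ‖W l‖ := by
              gcongr
              exact matNormMul _ _
          _ ≤ d * (n * β * (ρ * K ^ l * ‖ASG - A‖)) * β := by
              gcongr
          _ = (ρ * (n * d * β ^ 2)) * (K ^ l * ‖ASG - A‖) := by ring
          _ = (ρ * M) * (K ^ l * ‖ASG - A‖) := by rw [hM]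
      have hZ : ‖gcnZ ASG X W σ (l+1) - gcnZ A X W σ (l+1)‖ ≤ K ^ (l+1) * ‖ASG - A‖ := by
        rw [hdec]
        refine le_trans (norm_add_le _ _) (le_trans (add_le_add hterm1 hterm2) ?_)
        have hndB0 : (0:ℝ) ≤ n * d * β * B := by positivity
        have e1 : (n * d * β * B) * ‖ASG - A‖ ≤ (n * d * β * B) * (K ^ l * ‖ASG - A‖) :=
          mul_le_mul_of_nonneg_left (le_mul_of_one_le_left hΔ0 hpowK) hndB0
        have e2 : K ^ (l+1) * ‖ASG - A‖
            = (n * d * β * B) * (K ^ l * ‖ASG - A‖) + (ρ * M) * (K ^ l * ‖ASG - A‖)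
              + K ^ l * ‖ASG - A‖ := by rw [pow_succ, hK]; ring
        have hnn : (0:ℝ) ≤ K ^ l * ‖ASG - A‖ := mul_nonneg hpowK0 hΔ0
        linarith
      refine ⟨?_, fun _ => hZ⟩
      have hHeq : gcnH ASG X W σ (l+1) - gcnH A X W σ (l+1) =
          (gcnZ ASG X W σ (l+1)).map σ - (gcnZ A X W σ (l+1)).map σ := rfl
      rw [hHeq]
      refine le_trans (matNormMapSub σ hρ hσ _ _) ?_
      rw [mul_assoc]
      exact mul_le_mul_of_nonneg_left hZ hρ
  intro l hl1 hlL
  obtain ⟨hH, hZ⟩ := hErr l hlL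
  have hΔ0 : (0:ℝ) ≤ ‖ASG - A‖ := norm_nonneg _
  have hpow : K ^ l ≤ K ^ L := pow_le_pow_right₀ hK1 hlL
  have hpowL0 : (0:ℝ) ≤ K ^ L := by positivity
  constructor
  · refine le_trans (hZ hl1) ?_
    have h : K ^ l ≤ (1 + ρ) * K ^ L := by nlinarith [mul_nonneg hρ hpowL0]
    exact mul_le_mul_of_nonneg_right h hΔ0
  · refine le_trans hH ?_
    have h : ρ * K ^ l ≤ (1 + ρ) * K ^ L := by
      nlinarith [mul_le_mul_of_nonneg_left hpow hρ]
    exact mul_le_mul_of_nonneg_right h hΔ0
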